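/- Let L/F be an abelian extension of p-adic fields with e_0 = |G_0/G_1| where G_n are the ramification groups in lower numbering. Then G_n = G_{n+1} for all n ≥ 1 not divisible by e_0. In particular, if L/F is wildly and weakly ramified then G_0 = G_1. -/

import Mathlib

open IsLocalRing

lemma ram_aux {A B : Type*} [CommRing A] [CommRing B] [IsLocalRing B] [Algebra A B]
    (σ : B ≃ₐ[A] B) (k : ℕ) :
    ∀ y ∈ (maximalIdeal B) ^ k, σ y ∈ (maximalIdeal B) ^ k := by
  intro y hy
  have h1 : Ideal.map (σ : B →+* B) (maximalIdeal B) ≤ maximalIdeal B := by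
    rw [Ideal.map_le_iff_le_comap]
    intro x hx
    rw [Ideal.mem_comap]
    rw [mem_maximalIdeal] at hx ⊢
    intro hu
    exact hx (by simpa using hu.map (σ.symm : B →+* B))
  have h2 : Ideal.map (σ : B →+* B) ((maximalIdeal B) ^ k) ≤ (maximalIdeal B) ^ k := by
    rw [Ideal.map_pow]
    exact Ideal.pow_right_mono h1 k
  exact h2 (Ideal.mem_map_of_mem _ hy)

/-- The `n`-th ramification group (lower numbering) of an extension `B/A` of local rings,
viewed inside `Aut(B/A)`: the automorphisms `σ` with `σ x ≡ x mod 𝔪_B^(n+1)` for all `x`. -/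
def ramificationGroup (A B : Type*) [CommRing A] [CommRing B] [IsLocalRing B] [Algebra A B]
    (n : ℕ) : Subgroup (B ≃ₐ[A] B) where
  carrier := {σ | ∀ x : B, σ x - x ∈ (maximalIdeal B) ^ (n + 1)}
  one_mem' := by intro x; simp
  mul_mem' := by
    intro σ τ hσ hτ x
    have h : (σ * τ) x - x = σ (τ x - x) + (σ x - x) := by
      simp [AlgEquiv.mul_apply, map_sub]
    rw [h]
    exact add_mem (ram_aux σ (n+1) _ (hτ x)) (hσ x)
  inv_mem' := by
    intro σ hσ x
    have h := hσ (σ⁻¹ x)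
    have hx : σ (σ⁻¹ x) = x := σ.apply_symm_apply x
    rw [hx] at h
    simpa using neg_mem h

section LemA

variable {A B : Type*} [CommRing A] [CommRing B] [IsDomain B] [IsDiscreteValuationRing B]
  [Algebra A B]

lemma mem_pow_iff {π : B} (hπ : Irreducible π) (k : ℕ) (x : B) :
    x ∈ (maximalIdeal B) ^ k ↔ π ^ k ∣ x := by
  rw [(IsDiscreteValuationRing.irreducible_iff_uniformizer π).mp hπ, Ideal.span_singleton_pow,
    Ideal.mem_span_singleton]

lemma lemA (p : ℕ) [Fact p.Prime] [Finite (ResidueField B)]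
    (hchar : CharP (ResidueField B) p)
    {π : B} (hπ : Irreducible π) (n : ℕ) {τ : B ≃ₐ[A] B}
    (hτ : τ ∈ ramificationGroup A B n)
    (hπτ : τ π - π ∈ (maximalIdeal B) ^ (n + 2)) :
    τ ∈ ramificationGroup A B (n + 1) := by
  have hπ0 : ∀ k : ℕ, (π : B) ^ k ≠ 0 := fun k => pow_ne_zero k hπ.ne_zero
  have hd : ∀ x : B, π ^ (n + 1) ∣ τ x - x := fun x => (mem_pow_iff hπ _ _).mp (hτ x)
  choose c hc using hd
  -- cancellation
  have hcan : ∀ x y : B, x * π ^ (n + 1) = y * π ^ (n + 1) → x = y := fun x y h =>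
    mul_right_cancel₀ (hπ0 (n + 1)) h
  have hc' : ∀ x : B, τ x - x = c x * π ^ (n + 1) := fun x => by
    rw [hc x]; ring
  -- additivity of c
  have hadd : ∀ x y : B, c (x + y) = c x + c y := by
    intro x y
    apply hcan
    rw [add_mul, ← hc', ← hc', ← hc', map_add]
    ring
  -- Leibniz rule
  have hmul : ∀ x y : B, c (x * y) = τ x * c y + y * c x := by
    intro x y
    apply hcan
    rw [add_mul, mul_assoc, mul_assoc, ← hc', ← hc', ← hc', map_mul]
    ring
  -- τ x - x ∈ 𝔪^(n+2) for x ∈ 𝔪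
  have hm2 : ∀ x ∈ maximalIdeal B, τ x - x ∈ (maximalIdeal B) ^ (n + 2) := by
    intro x hx
    obtain ⟨b, rfl⟩ : π ∣ x := by
      simpa using (mem_pow_iff hπ 1 x).mp (by simpa using hx)
    have h1 : τ (π * b) - π * b = τ b * (τ π - π) + (τ b - b) * π := by
      rw [map_mul]; ring
    rw [h1]
    refine add_mem (Ideal.mul_mem_left _ _ hπτ) ?_
    have : (maximalIdeal B) ^ (n + 2) = (maximalIdeal B) ^ (n + 1) * maximalIdeal B := by
      rw [← pow_succ]
    rw [this]
    refine Ideal.mul_mem_mul (hτ b) ?_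
    rw [(IsDiscreteValuationRing.irreducible_iff_uniformizer π).mp hπ]
    exact Ideal.mem_span_singleton_self π
  -- c maps 𝔪 into 𝔪
  have hcm : ∀ x ∈ maximalIdeal B, c x ∈ maximalIdeal B := by
    intro x hx
    have h1 : π ^ (n + 2) ∣ c x * π ^ (n + 1) := by
      rw [← hc' x]; exact (mem_pow_iff hπ _ _).mp (hm2 x hx)
    obtain ⟨d, hd⟩ := h1
    have h2 : c x = π * d := by
      apply hcan
      rw [hd]; ring
    rw [(IsDiscreteValuationRing.irreducible_iff_uniformizer π).mp hπ, Ideal.mem_span_singleton]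
    exact ⟨d, h2⟩
  -- residue of τ x equals residue of x
  have hres : ∀ x : B, residue B (τ x) = residue B x := by
    intro x
    have h1 : τ x - x ∈ maximalIdeal B := Ideal.pow_le_self (Nat.succ_ne_zero n) (hτ x)
    have h2 : residue B (τ x - x) = 0 := Ideal.Quotient.eq_zero_iff_mem.mpr h1
    rw [map_sub, sub_eq_zero] at h2
    exact h2
  -- residue of c x is zero for all x
  have hkey : ∀ x : B, c x ∈ maximalIdeal B := by
    intro x
    haveI := hchar
    haveI : ExpChar (ResidueField B) p := ExpChar.prime (Fact.out)
    obtain ⟨wbar, hw⟩ := surjective_frobenius (ResidueField B) p (residue B x)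
    obtain ⟨w, rfl⟩ := IsLocalRing.residue_surjective (R := B) wbar
    rw [frobenius_def] at hw
    -- key induction: residue (c (w^(j+1))) = (j+1) * residue w ^ j * residue (c w)
    have hind : ∀ j : ℕ, residue B (c (w ^ (j + 1)))
        = (j + 1 : ℕ) * (residue B w) ^ j * residue B (c w) := by
      intro j
      induction j with
      | zero => simp
      | succ j ih =>
        have h1 : (w : B) ^ (j + 2) = w * w ^ (j + 1) := by ring
        rw [h1, hmul, map_add, map_mul, map_mul, ih, hres]
        simp only [map_pow]
        push_cast
        ring
    -- x - w^p ∈ 𝔪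
    have hx1 : x - w ^ p ∈ maximalIdeal B := by
      have h3 : residue B (x - w ^ p) = 0 := by
        rw [map_sub, map_pow, hw, sub_self]
      exact Ideal.Quotient.eq_zero_iff_mem.mp h3
    have h4 : c x = c (w ^ p) + c (x - w ^ p) := by
      rw [← hadd]; congr 1; ring
    have hp1 : p - 1 + 1 = p := Nat.succ_pred_eq_of_pos (Fact.out : p.Prime).pos
    have h5 : residue B (c (w ^ p)) = 0 := by
      have h6 := hind (p - 1)
      rw [hp1] at h6
      rw [h6, CharP.cast_eq_zero (ResidueField B) p]
      ring
    have h7 : residue B (c x) = 0 := by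
      rw [h4, map_add, h5, zero_add]
      exact Ideal.Quotient.eq_zero_iff_mem.mpr (hcm _ hx1)
    exact Ideal.Quotient.eq_zero_iff_mem.mp h7
  intro x
  have : τ x - x = c x * π ^ (n + 1) := hc' x
  rw [this]
  have h2 : (maximalIdeal B) ^ (n + 1 + 1) = maximalIdeal B * (maximalIdeal B) ^ (n + 1) := by
    rw [pow_succ, mul_comm]
  rw [h2]
  exact Ideal.mul_mem_mul (hkey x) ((mem_pow_iff hπ _ _).mpr dvd_rfl)

end LemA

section Finiteness

lemma finiteAut {A B F L : Type*} [CommRing A] [CommRing B] [Field F] [Field L]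
    [IsDomain B] [Algebra A F] [IsFractionRing A F] [Algebra B L] [IsFractionRing B L]
    [Algebra F L] [Algebra A B] [Algebra A L] [IsScalarTower A B L] [IsScalarTower A F L]
    [FiniteDimensional F L] : Finite (B ≃ₐ[A] B) := by
  have hcomm : ∀ (σ : B ≃ₐ[A] B) (f : F),
      IsFractionRing.ringEquivOfRingEquiv (σ : B ≃+* B) (algebraMap F L f)
        = algebraMap F L f := by
    intro σ f
    obtain ⟨x, y, hy, rfl⟩ := IsFractionRing.div_surjective (A := A) f
    have hA : ∀ a : A, IsFractionRing.ringEquivOfRingEquiv (σ : B ≃+* B)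
        (algebraMap A L a) = algebraMap A L a := by
      intro a
      rw [IsScalarTower.algebraMap_apply A B L,
        IsFractionRing.ringEquivOfRingEquiv_algebraMap]
      congr 1
      exact σ.commutes a
    rw [map_div₀, map_div₀, ← IsScalarTower.algebraMap_apply A F L,
      ← IsScalarTower.algebraMap_apply A F L, hA, hA]
  let Φ : (B ≃ₐ[A] B) → (L ≃ₐ[F] L) := fun σ =>
    AlgEquiv.ofRingEquiv (hcomm σ)
  have hΦ : Function.Injective Φ := by
    intro σ τ h
    ext x
    have h1 : algebraMap B L (σ x) = algebraMap B L (τ x) := by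
      have e1 : (Φ σ) (algebraMap B L x) = algebraMap B L (σ x) :=
        IsFractionRing.ringEquivOfRingEquiv_algebraMap _ x
      have e2 : (Φ τ) (algebraMap B L x) = algebraMap B L (τ x) :=
        IsFractionRing.ringEquivOfRingEquiv_algebraMap _ x
      rw [← e1, ← e2, h]
    exact IsFractionRing.injective B L h1
  exact Finite.of_injective Φ hΦ

end Finiteness

/-- Let `L/F` be a finite abelian extension of `p`-adic fields, modelled by
an extension `B/A` of complete discrete valuation rings with finite residue fields of
characteristic `p`, with ramification groups `G_n` (lower numbering) and
`e₀ = |G₀/G₁| = |G₀|/|G₁|`.  Then `G_n = G_{n+1}` for all `n ≥ 1` not divisible by `e₀`.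
In particular, if `L/F` is wildly ramified (`p ∣ |G₀|`) and weakly ramified (`G₂ = 1`),
then `G₀ = G₁`. -/
theorem stmt6 (p : ℕ) [Fact p.Prime]
    (A B F L : Type*) [CommRing A] [CommRing B] [Field F] [Field L]
    [IsDomain A] [IsDomain B] [IsDiscreteValuationRing A] [IsDiscreteValuationRing B]
    [Algebra A F] [IsFractionRing A F] [Algebra B L] [IsFractionRing B L]
    [Algebra F L] [Algebra A B] [Algebra A L] [IsScalarTower A B L] [IsScalarTower A F L]
    [FiniteDimensional F L] [IsGalois F L] [IsIntegralClosure B A L]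
    [NoZeroSMulDivisors A B]
    [IsAdicComplete (maximalIdeal A) A]
    [Finite (ResidueField A)] [Finite (ResidueField B)]
    (hchar : CharP (ResidueField B) p)
    (habel : ∀ σ τ : B ≃ₐ[A] B, σ * τ = τ * σ) :
    (∀ n : ℕ, 1 ≤ n →
      ¬ ((Nat.card (ramificationGroup A B 0) / Nat.card (ramificationGroup A B 1)) ∣ n) →
      ramificationGroup A B n = ramificationGroup A B (n + 1)) ∧
    (p ∣ Nat.card (ramificationGroup A B 0) → ramificationGroup A B 2 = ⊥ →
      ramificationGroup A B 0 = ramificationGroup A B 1) := by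
  haveI : Finite (B ≃ₐ[A] B) := finiteAut (F := F) (L := L)
  haveI := hchar
  obtain ⟨π, hπ⟩ := IsDiscreteValuationRing.exists_irreducible B
  have hπ0 : π ≠ 0 := hπ.ne_zero
  have hmax : maximalIdeal B = Ideal.span {π} :=
    (IsDiscreteValuationRing.irreducible_iff_uniformizer π).mp hπ
  have hπm : π ∈ maximalIdeal B := by
    rw [hmax]; exact Ideal.mem_span_singleton_self π
  have hcan : ∀ x y : B, π * x = π * y → x = y := fun x y h => mul_left_cancel₀ hπ0 h
  -- the map a : σ ↦ σ π / π
  have hdvd : ∀ σ : B ≃ₐ[A] B, π ∣ σ π := by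
    intro σ
    have h1 : σ π ∈ maximalIdeal B := by
      have h2 := ram_aux σ 1 π (by rw [pow_one]; exact hπm)
      rwa [pow_one] at h2
    rwa [hmax, Ideal.mem_span_singleton] at h1
  choose a ha using hdvd
  have hco : ∀ σ τ : B ≃ₐ[A] B, a (σ * τ) = a σ * σ (a τ) := by
    intro σ τ
    apply hcan
    rw [← ha (σ * τ)]
    have h1 : (σ * τ) π = σ (τ π) := rfl
    rw [h1, ha τ, map_mul, ha σ]
    ring
  have ha1 : a 1 = 1 := by
    apply hcan
    rw [← ha 1, mul_one]
    rfl
  have hunit : ∀ σ : B ≃ₐ[A] B, IsUnit (a σ) := by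
    intro σ
    have h1 := hco σ σ⁻¹
    rw [mul_inv_cancel, ha1] at h1
    exact IsUnit.of_mul_eq_one _ h1.symm
  -- residue triviality on G₀
  have hres0 : ∀ (σ : B ≃ₐ[A] B), σ ∈ ramificationGroup A B 0 →
      ∀ x : B, residue B (σ x) = residue B x := by
    intro σ hσ x
    have h1 : σ x - x ∈ maximalIdeal B := by
      have := hσ x
      rwa [zero_add, pow_one] at this
    have h2 := Ideal.Quotient.eq_zero_iff_mem.mpr h1
    rwa [map_sub, sub_eq_zero] at h2
  -- the homomorphism θ : G₀ →* kˣ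
  have hθu : ∀ σ : B ≃ₐ[A] B, IsUnit (residue B (a σ)) := fun σ => (hunit σ).map (residue B)
  let θ : (ramificationGroup A B 0) →* (ResidueField B)ˣ :=
    MonoidHom.mk' (fun σ => (hθu σ.1).unit) (by
      intro σ τ
      apply Units.ext
      simp only [IsUnit.unit_spec, Units.val_mul]
      have h1 : ((σ * τ : ramificationGroup A B 0) : B ≃ₐ[A] B) = σ.1 * τ.1 := rfl
      rw [h1, hco, map_mul, hres0 σ.1 σ.2])
  have hθval : ∀ σ : ramificationGroup A B 0, (θ σ : ResidueField B) = residue B (a σ.1) :=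
    fun σ => IsUnit.unit_spec _
  -- monotonicity
  have hmono : ∀ {m k : ℕ}, k ≤ m → ramificationGroup A B m ≤ ramificationGroup A B k := by
    intro m k hkm σ hσ x
    exact Ideal.pow_le_pow_right (by omega) (hσ x)
  -- kernel of θ is G₁
  have hker1 : ∀ σ : ramificationGroup A B 0,
      θ σ = 1 ↔ (σ : B ≃ₐ[A] B) ∈ ramificationGroup A B 1 := by
    intro σ
    rw [Units.ext_iff, hθval, Units.val_one]
    have hdiff : (σ : B ≃ₐ[A] B) π - π = π * (a σ.1 - 1) := by
      rw [ha σ.1]; ring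
    constructor
    · intro h1
      have h2 : a σ.1 - 1 ∈ maximalIdeal B := by
        rw [← Ideal.Quotient.eq_zero_iff_mem, map_sub, map_one, sub_eq_zero]
        exact h1
      rw [hmax, Ideal.mem_span_singleton] at h2
      obtain ⟨d, hd⟩ := h2
      have h3 : (σ : B ≃ₐ[A] B) π - π ∈ maximalIdeal B ^ (0 + 2) := by
        rw [mem_pow_iff hπ]
        exact ⟨d, by rw [hdiff, hd]; ring⟩
      exact lemA p hchar hπ 0 σ.2 h3
    · intro h1
      have h2 : π ^ 2 ∣ π * (a σ.1 - 1) := by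
        rw [← hdiff, ← mem_pow_iff hπ]
        exact h1 π
      obtain ⟨d, hd⟩ := h2
      have h3 : a σ.1 - 1 = π * d := hcan _ _ (by rw [hd]; ring)
      have h4 : a σ.1 - 1 ∈ maximalIdeal B := by
        rw [hmax, Ideal.mem_span_singleton]; exact ⟨d, h3⟩
      have h5 := Ideal.Quotient.eq_zero_iff_mem.mpr h4
      rwa [map_sub, map_one, sub_eq_zero] at h5
  -- e₀ = card of range of θ
  have hcard : Nat.card (ramificationGroup A B 0) / Nat.card (ramificationGroup A B 1)
      = Nat.card θ.range := by
    have hk : θ.ker = (ramificationGroup A B 1).subgroupOf (ramificationGroup A B 0) := by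
      ext σ
      rw [MonoidHom.mem_ker, Subgroup.mem_subgroupOf]
      exact hker1 σ
    have e1 : Nat.card θ.ker = Nat.card (ramificationGroup A B 1) := by
      rw [hk]
      exact Nat.card_congr (Subgroup.subgroupOfEquivOfLe (hmono (by norm_num))).toEquiv
    have e2 : Nat.card (ramificationGroup A B 0) = Nat.card θ.range * Nat.card θ.ker := by
      rw [← Nat.card_congr (QuotientGroup.quotientKerEquivRange θ).toEquiv]
      exact Subgroup.card_eq_card_quotient_mul_card_subgroup θ.ker
    rw [← e1, e2, Nat.mul_div_cancel _ Nat.card_pos]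
  -- the key conjugation argument
  have hkey : ∀ n : ℕ, 1 ≤ n → ∀ τ : B ≃ₐ[A] B, τ ∈ ramificationGroup A B n →
      τ ∉ ramificationGroup A B (n + 1) → Nat.card θ.range ∣ n := by
    intro n hn τ hτn hτn1
    have hdiffτ : τ π - π = π * (a τ - 1) := by rw [ha τ]; ring
    have h1 : π ^ n ∣ a τ - 1 := by
      have h2 : π ^ (n + 1) ∣ π * (a τ - 1) := by
        rw [← hdiffτ, ← mem_pow_iff hπ]
        exact hτn π
      obtain ⟨d, hd⟩ := h2
      exact ⟨d, hcan _ _ (by rw [hd]; ring)⟩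
    obtain ⟨cc, hcc⟩ := h1
    have hato : a τ = 1 + π ^ n * cc := by rw [← hcc]; ring
    have hccu : residue B cc ≠ 0 := by
      intro h0
      apply hτn1
      have hccm : π ∣ cc := by
        rw [← Ideal.mem_span_singleton, ← hmax]
        exact Ideal.Quotient.eq_zero_iff_mem.mp h0
      obtain ⟨d, hd⟩ := hccm
      have hπn2 : τ π - π ∈ maximalIdeal B ^ (n + 2) := by
        rw [mem_pow_iff hπ]
        exact ⟨d, by rw [hdiffτ, hcc, hd]; ring⟩
      exact lemA p hchar hπ n hτn hπn2
    -- every θ σ has θ σ ^ n = 1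
    have hθn : ∀ σ : ramificationGroup A B 0, (θ σ) ^ n = 1 := by
      rintro ⟨σ, hσ⟩
      obtain ⟨ε, hεdef⟩ : ∃ ε, τ (a σ) - a σ = ε := ⟨_, rfl⟩
      have hτa : τ (a σ) = a σ + ε := by linear_combination hεdef
      have hε : ε ∈ maximalIdeal B ^ (n + 1) := by rw [← hεdef]; exact hτn (a σ)
      have hab : a σ * σ (a τ) = a τ * τ (a σ) := by
        rw [← hco σ τ, habel σ τ, hco τ σ]
      have h4 : σ (a τ) = 1 + (π * a σ) ^ n * σ cc := by
        rw [hato, map_add, map_one, map_mul, map_pow, ha σ]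
      rw [h4, hato, hτa] at hab
      have hEeq : ε = π ^ n * (a σ ^ (n + 1) * σ cc - cc * a σ - cc * ε) := by
        linear_combination -hab
      have hπE : π ∣ (a σ ^ (n + 1) * σ cc - cc * a σ - cc * ε) := by
        obtain ⟨d, hd⟩ := (mem_pow_iff hπ _ _).mp hε
        refine (mul_dvd_mul_iff_left (pow_ne_zero n hπ0)).mp ?_
        refine ⟨d, ?_⟩
        rw [← hEeq, hd]
        ring
      have hresε : residue B ε = 0 :=
        Ideal.Quotient.eq_zero_iff_mem.mpr (Ideal.pow_le_self (Nat.succ_ne_zero n) hε)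
      have hresE : residue B (a σ) ^ (n + 1) * residue B cc
          - residue B cc * residue B (a σ) = 0 := by
        obtain ⟨d, hd⟩ := hπE
        have hresπ : residue B π = 0 := Ideal.Quotient.eq_zero_iff_mem.mpr hπm
        have h6 : residue B (a σ ^ (n + 1) * σ cc - cc * a σ - cc * ε) = 0 := by
          rw [hd, map_mul, hresπ, zero_mul]
        rw [map_sub, map_sub, map_mul, map_mul, map_mul, map_pow,
          hres0 σ hσ, hresε, mul_zero, sub_zero] at h6
        exact h6
      have haU : residue B (a σ) ≠ 0 := ((hunit σ).map (residue B)).ne_zero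
      have h8 : residue B (a σ) ^ n = 1 := by
        have h9 : residue B cc * residue B (a σ) * (residue B (a σ) ^ n - 1) = 0 := by
          linear_combination hresE
        rcases mul_eq_zero.mp h9 with h | h
        · rcases mul_eq_zero.mp h with h | h
          · exact absurd h hccu
          · exact absurd h haU
        · exact sub_eq_zero.mp h
      apply Units.ext
      rw [Units.val_pow_eq_pow_val, hθval, Units.val_one]
      exact h8
    have hexp : Monoid.exponent θ.range ∣ n := by
      apply Monoid.exponent_dvd_of_forall_pow_eq_one
      rintro ⟨x, hx⟩
      obtain ⟨σ, rfl⟩ := hx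
      apply Subtype.ext
      rw [SubmonoidClass.coe_pow]
      exact hθn σ
    rw [← IsCyclic.exponent_eq_card]
    exact hexp
  -- Part 1
  have hpart1 : ∀ n : ℕ, 1 ≤ n →
      ¬ ((Nat.card (ramificationGroup A B 0) / Nat.card (ramificationGroup A B 1)) ∣ n) →
      ramificationGroup A B n = ramificationGroup A B (n + 1) := by
    intro n hn hnd
    rw [hcard] at hnd
    refine le_antisymm ?_ (hmono (Nat.le_succ n))
    intro τ hτ
    by_contra hτ1
    exact hnd (hkey n hn τ hτ hτ1)
  refine ⟨hpart1, ?_⟩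
  -- Part 2
  intro hp h2
  by_cases h1 : Nat.card (ramificationGroup A B 0) / Nat.card (ramificationGroup A B 1) = 1
  · -- e₀ = 1 : the two groups have the same cardinality
    obtain ⟨q, hq⟩ : Nat.card (ramificationGroup A B 1) ∣ Nat.card (ramificationGroup A B 0) :=
      Subgroup.card_dvd_of_le (hmono (by norm_num))
    have hpos : 0 < Nat.card (ramificationGroup A B 1) := Nat.card_pos
    rw [hq, Nat.mul_div_cancel_left _ hpos] at h1
    have hcardeq : Nat.card (ramificationGroup A B 0) = Nat.card (ramificationGroup A B 1) := by
      rw [hq, h1, mul_one]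
    have hsub : (ramificationGroup A B 1 : Set (B ≃ₐ[A] B)) ⊆ ramificationGroup A B 0 :=
      hmono (by norm_num)
    have heq : (ramificationGroup A B 1 : Set (B ≃ₐ[A] B)) = ramificationGroup A B 0 :=
      Set.eq_of_subset_of_ncard_le hsub (by
        rw [← Nat.card_coe_set_eq, ← Nat.card_coe_set_eq]
        exact le_of_eq hcardeq) (Set.toFinite _)
    exact (SetLike.ext' heq).symm
  · -- e₀ ≠ 1 : then G₁ = G₂ = ⊥ and θ is injective, contradiction with wild ramification
    exfalso
    have hne : ¬ ((Nat.card (ramificationGroup A B 0) / Nat.card (ramificationGroup A B 1)) ∣ 1) := by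
      rw [Nat.dvd_one]; exact h1
    have hG12 := hpart1 1 le_rfl hne
    have hG1bot : ramificationGroup A B 1 = ⊥ := by
      rw [hG12]
      exact h2
    have hkerbot : θ.ker = ⊥ := by
      ext σ
      rw [MonoidHom.mem_ker, Subgroup.mem_bot, hker1 σ, hG1bot, Subgroup.mem_bot]
      constructor
      · intro h; exact Subtype.ext h
      · intro h; rw [h]; rfl
    have hinj : Function.Injective θ := (MonoidHom.ker_eq_bot_iff θ).mp hkerbot
    have hdvd0 : Nat.card (ramificationGroup A B 0) ∣ Nat.card (ResidueField B)ˣ := by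
      rw [Nat.card_congr (MonoidHom.ofInjective hinj).toEquiv]
      exact Subgroup.card_subgroup_dvd_card θ.range
    haveI : Fintype (ResidueField B) := Fintype.ofFinite _
    obtain ⟨m, hpp, hcardk⟩ := FiniteField.card (ResidueField B) p
    have hku : Nat.card (ResidueField B)ˣ = Fintype.card (ResidueField B) - 1 := by
      rw [Nat.card_units, Nat.card_eq_fintype_card]
    have hpk : p ∣ Fintype.card (ResidueField B) := by
      rw [hcardk]
      exact dvd_pow_self p m.pos.ne'
    have hd1 : p ∣ Fintype.card (ResidueField B) - 1 := by
      rw [← hku]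
      exact hp.trans hdvd0
    have hp1 : p ∣ 1 := by
      have h3 := Nat.dvd_sub hpk hd1
      rwa [Nat.sub_sub_self Fintype.card_pos] at h3
    exact (Fact.out : p.Prime).ne_one (Nat.dvd_one.mp hp1)
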